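/- For every n ≥ 1, setting b(n) = ⌊(n+2)/φ⌋ − 1 and c(n) = ⌊(n+1)φ⌋, the entries A(n,i) for b(n) < i < c(n) form a permutation of the set {b(n)+1, …, c(n)−1} which leaves no element fixed; that is, for each i with b(n) < i < c(n) there exists j with b(n) < j < c(n) and A(n,i) = j, the restricted map is a bijection of that interval, and A(n,i) ≠ i for all i with b(n) < i < c(n). -/

import Mathlib

/-- The golden ratio `(1 + √5)/2`. -/
noncomputable def phi : ℝ := (1 + Real.sqrt 5) / 2

/-- The Hurt-Sada array `A : ℕ → ℕ → ℕ`.  Row `0` is the identity sequence;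
row `n+1` is obtained from row `n` by moving the entry `n+1` (located at the unique
position `p` with `A n p = n+1`) by `n+1` places to the right, shifting the jumped-over
entries one place left. -/
noncomputable def A : ℕ → ℕ → ℕ
  | 0, k => k
  | n + 1, j =>
    let p := sInf {i | A n i = n + 1}
    if j < p then A n j
    else if j < p + (n + 1) then A n (j + 1)
    else if j = p + (n + 1) then n + 1
    else A n j

open goldenRatio in
lemma phi_eq : phi = Real.goldenRatio := rfl

lemma phi_pos : 0 < phi := by rw [phi_eq]; exact Real.goldenRatio_pos

lemma one_lt_phi : 1 < phi := by rw [phi_eq]; exact Real.one_lt_goldenRatio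

lemma phi_lt_two : phi < 2 := by rw [phi_eq]; exact Real.goldenRatio_lt_two

lemma phi_sq : phi * phi = phi + 1 := by
  have := Real.goldenRatio_sq
  rw [pow_two] at this
  rw [phi_eq]; exact this

lemma phi_irr : Irrational phi := by rw [phi_eq]; exact Real.goldenRatio_irrational

noncomputable def Bf (m : ℕ) : ℕ := ⌊(m : ℝ) / phi⌋₊
noncomputable def Wf (j : ℕ) : ℕ := ⌊(j : ℝ) * phi⌋₊
noncomputable def Uf (j : ℕ) : ℕ := Wf j + j
noncomputable def g (m : ℕ) : ℕ :=
  if Bf (m + 1) = Bf m + 1 then Bf (m + 1) - 1 else m - Bf m - 1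

lemma B_le' (m : ℕ) : (Bf m : ℝ) * phi ≤ m := by
  have h := Nat.floor_le (show (0:ℝ) ≤ (m:ℝ) / phi from div_nonneg (by positivity) phi_pos.le)
  unfold Bf
  have h2 : ((Bf m : ℝ)) * phi ≤ ((m:ℝ)/phi) * phi :=
    mul_le_mul_of_nonneg_right h phi_pos.le
  rwa [div_mul_cancel₀ _ (ne_of_gt phi_pos)] at h2

lemma lt_B' (m : ℕ) : (m : ℝ) < (Bf m + 1) * phi := by
  have h := Nat.lt_floor_add_one ((m:ℝ)/phi)
  have h2 := (div_lt_iff₀ phi_pos).1 h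
  unfold Bf
  linarith

lemma W_le' (j : ℕ) : (Wf j : ℝ) ≤ j * phi :=
  Nat.floor_le (mul_nonneg (by positivity) phi_pos.le)

lemma lt_W' (j : ℕ) : (j : ℝ) * phi < Wf j + 1 := Nat.lt_floor_add_one _

lemma B_lt' (m : ℕ) (hm : 1 ≤ m) : (Bf m : ℝ) * phi < m := by
  rcases (B_le' m).lt_or_eq with h | h
  · exact h
  · exfalso
    rcases Nat.eq_zero_or_pos (Bf m) with h0 | h0
    · have hm0 : (m:ℝ) = 0 := by rw [h0] at h; simpa using h.symm
      have : m = 0 := by exact_mod_cast hm0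
      omega
    · have hirr : Irrational ((Bf m : ℝ) * phi) := phi_irr.natCast_mul h0.ne'
      exact hirr.ne_nat m h

lemma W_lt' (j : ℕ) (hj : 1 ≤ j) : (Wf j : ℝ) < j * phi := by
  rcases (W_le' j).lt_or_eq with h | h
  · exact h
  · exfalso
    have hirr : Irrational ((j : ℝ) * phi) := phi_irr.natCast_mul (by omega : j ≠ 0)
    exact hirr.ne_nat (Wf j) h.symm

lemma B_eq_of {x y : ℕ} (h1 : (y:ℝ) * phi ≤ x) (h2 : (x:ℝ) < (y+1) * phi) : Bf x = y := by
  unfold Bf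
  rw [Nat.floor_eq_iff (div_nonneg (by positivity) phi_pos.le)]
  constructor
  · rw [le_div_iff₀ phi_pos]; exact h1
  · rw [div_lt_iff₀ phi_pos]; push_cast; push_cast at h2; linarith

lemma W_eq_of {j y : ℕ} (h1 : (y:ℝ) ≤ j * phi) (h2 : (j:ℝ) * phi < y + 1) : Wf j = y := by
  unfold Wf
  rw [Nat.floor_eq_iff (mul_nonneg (by positivity) phi_pos.le)]
  exact ⟨h1, by push_cast; push_cast at h2; linarith⟩
lemma W_eq (j : ℕ) : Wf j = j + Bf j := by
  have h : (j:ℝ) * phi = (j:ℝ)/phi + j := by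
    have hne := phi_pos.ne'
    field_simp
    linear_combination (j:ℝ) * phi_sq
  unfold Wf
  rw [h, Nat.floor_add_natCast (div_nonneg (by positivity) phi_pos.le)]
  unfold Bf
  omega

lemma B_mono {a b : ℕ} (h : a ≤ b) : Bf a ≤ Bf b :=
  Nat.floor_mono (div_le_div_of_nonneg_right (by exact_mod_cast h) phi_pos.le)

lemma B_succ_le (m : ℕ) : Bf (m+1) ≤ Bf m + 1 := by
  have h1 := lt_B' m
  have h3 : Bf (m+1) < Bf m + 2 := by
    have h2 : ((m+1:ℕ):ℝ) / phi < ((Bf m + 2 : ℕ):ℝ) := by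
      rw [div_lt_iff₀ phi_pos]; push_cast; nlinarith [one_lt_phi]
    exact (Nat.floor_lt (div_nonneg (by positivity) phi_pos.le)).2 h2
  omega

lemma B_lt_self (m : ℕ) (hm : 1 ≤ m) : Bf m < m := by
  have h1 := B_lt' m hm
  have h2 : (Bf m : ℝ) < m := by nlinarith [one_lt_phi, Nat.cast_nonneg (α := ℝ) (Bf m)]
  exact_mod_cast h2

lemma B_W (j : ℕ) : Bf (Wf (j+1)) = j := by
  apply B_eq_of
  · have h := lt_W' (j+1)
    push_cast at h ⊢
    nlinarith [one_lt_phi]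
  · have h := W_lt' (j+1) (by omega)
    push_cast at h ⊢
    linarith

lemma B_W1 (j : ℕ) : Bf (Wf j + 1) = j := by
  apply B_eq_of
  · have h := lt_W' j
    push_cast at h ⊢
    linarith
  · have h := W_le' j
    push_cast at h ⊢
    nlinarith [one_lt_phi]

lemma B_U (j : ℕ) (hj : 1 ≤ j) : Bf (Uf j) = Wf j := by
  unfold Uf
  apply B_eq_of
  · have h := W_le' j
    have hint := mul_le_mul_of_nonneg_right h (by linarith [one_lt_phi] : (0:ℝ) ≤ phi - 1)
    push_cast
    nlinarith [phi_sq]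
  · have h := lt_W' j
    have hint := mul_lt_mul_of_pos_right h (by linarith [one_lt_phi] : (0:ℝ) < phi - 1)
    push_cast
    nlinarith [phi_sq]

lemma notLW_U (j : ℕ) (hj : 1 ≤ j) : Bf (Uf j + 1) = Wf j := by
  unfold Uf
  apply B_eq_of
  · have h := W_le' j
    have hint := mul_le_mul_of_nonneg_right h (by linarith [one_lt_phi] : (0:ℝ) ≤ phi - 1)
    push_cast
    nlinarith [phi_sq]
  · have h := lt_W' j
    have hint := mul_lt_mul_of_pos_right h (by linarith [one_lt_phi] : (0:ℝ) < phi - 1)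
    push_cast
    nlinarith [phi_sq]

lemma LW_rep (m : ℕ) (hm : 1 ≤ m) (h : Bf (m+1) = Bf m + 1) : Wf (Bf (m+1)) = m := by
  apply W_eq_of
  · have h1 := lt_B' m
    rw [h]
    push_cast at h1 ⊢
    linarith
  · have h2 := B_lt' (m+1) (by omega)
    push_cast at h2 ⊢
    linarith

lemma UW_rep (m : ℕ) (hm : 1 ≤ m) (h : Bf (m+1) = Bf m) :
    Uf (m - Bf m) = m ∧ 1 ≤ m - Bf m := by
  have hBm : Bf m < m := B_lt_self m hm
  have hcast : ((m - Bf m : ℕ) : ℝ) = (m:ℝ) - Bf m := by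
    push_cast [Nat.cast_sub hBm.le]; ring
  have hW : Wf (m - Bf m) = Bf m := by
    apply W_eq_of
    · rw [hcast]
      have h1 := B_le' m
      have hint := mul_le_mul_of_nonneg_right h1 phi_pos.le
      nlinarith [phi_sq]
    · rw [hcast]
      have h1 : ((m:ℝ)+1) < ((Bf m : ℝ) + 1) * phi := by
        have := lt_B' (m+1)
        rw [h] at this
        push_cast at this
        linarith
      have hint := mul_lt_mul_of_pos_right h1 phi_pos
      nlinarith [phi_sq]
  constructor
  · unfold Uf
    rw [hW]
    omega
  · omega

lemma W_lt_W {a b : ℕ} (h : a < b) : Wf a < Wf b := by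
  have h1 := W_le' a
  have h2 := lt_W' b
  have h3 : ((a:ℝ)) + 1 ≤ b := by exact_mod_cast h
  have : (Wf a : ℝ) < Wf b := by nlinarith [one_lt_phi]
  exact_mod_cast this

lemma U_lt_U {a b : ℕ} (h : a < b) : Uf a < Uf b := by
  have := W_lt_W h
  unfold Uf
  omega

lemma g_W (j : ℕ) (hj : 1 ≤ j) : g (Wf j) = j - 1 := by
  obtain ⟨k, rfl⟩ : ∃ k, j = k+1 := ⟨j-1, by omega⟩
  unfold g
  rw [B_W1 (k+1), B_W k, if_pos rfl]

lemma g_U (j : ℕ) (hj : 1 ≤ j) : g (Uf j) = j - 1 := by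
  unfold g
  rw [notLW_U j hj, B_U j hj, if_neg (by omega)]
  unfold Uf
  omega
lemma A_zero (k : ℕ) : A 0 k = k := by rw [A]

lemma A_succ (n j : ℕ) : A (n+1) j =
    if j < sInf {i | A n i = n + 1} then A n j
    else if j < sInf {i | A n i = n + 1} + (n + 1) then A n (j + 1)
    else if j = sInf {i | A n i = n + 1} + (n + 1) then n + 1
    else A n j := by rw [A]

lemma phi_lb : 3/2 < phi := by
  have h1 : Real.sqrt 5 ^ 2 = 5 := Real.sq_sqrt (by norm_num)
  have h2 : (2:ℝ) < Real.sqrt 5 := by nlinarith [Real.sqrt_nonneg 5]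
  unfold phi; linarith

lemma phi_ub : phi < 13/8 := by
  have h1 : Real.sqrt 5 ^ 2 = 5 := Real.sq_sqrt (by norm_num)
  have h2 : Real.sqrt 5 < 9/4 := by nlinarith [Real.sqrt_nonneg 5]
  unfold phi; linarith

lemma Bf2 : Bf 2 = 1 := B_eq_of (by push_cast; nlinarith [phi_ub]) (by push_cast; nlinarith [phi_lb])
lemma Bf3 : Bf 3 = 1 := B_eq_of (by push_cast; nlinarith [phi_ub]) (by push_cast; nlinarith [phi_lb])
lemma Bf4 : Bf 4 = 2 := B_eq_of (by push_cast; nlinarith [phi_ub]) (by push_cast; nlinarith [phi_lb])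
lemma Bf5 : Bf 5 = 3 := B_eq_of (by push_cast; nlinarith [phi_ub]) (by push_cast; nlinarith [phi_lb])
lemma Bf6 : Bf 6 = 3 := B_eq_of (by push_cast; nlinarith [phi_ub]) (by push_cast; nlinarith [phi_lb])
lemma Wf2 : Wf 2 = 3 := W_eq_of (by push_cast; nlinarith [phi_lb]) (by push_cast; nlinarith [phi_ub])

lemma g4 : g 4 = 2 := by unfold g; rw [show (4:ℕ)+1 = 5 from rfl, Bf5, Bf4, if_pos rfl]
lemma g5 : g 5 = 1 := by
  unfold g
  rw [show (5:ℕ)+1 = 6 from rfl, Bf6, Bf5, if_neg (by omega)]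

/-- `Bf (Uf j + 2) = Wf j + 1`. -/
lemma B_U2 (j : ℕ) (hj : 1 ≤ j) : Bf (Uf j + 2) = Wf j + 1 := by
  unfold Uf
  have h1 := W_le' j
  have h2 := lt_W' j
  have hphi1 : (0:ℝ) ≤ phi - 1 := by linarith [one_lt_phi]
  apply B_eq_of
  · have hint := mul_le_mul_of_nonneg_right h1 hphi1
    push_cast
    nlinarith [phi_sq, phi_lt_two]
  · have hint := mul_lt_mul_of_pos_right h2 phi_pos
    push_cast
    nlinarith [phi_sq, one_lt_phi]

/-- `g (Uf j + 1) = Wf j`. -/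
lemma gU1 (j : ℕ) (hj : 1 ≤ j) : g (Uf j + 1) = Wf j := by
  unfold g
  rw [show Uf j + 1 + 1 = Uf j + 2 from rfl, B_U2 j hj, notLW_U j hj, if_pos rfl]
  omega

/-- Under the hypothesis `Bf (j+1) = Bf j + 1`, `Bf (Uf j + 3) = Wf j + 2`. -/
lemma B_U3 (j : ℕ) (hj : 1 ≤ j) (hcond : Bf (j+1) = Bf j + 1) :
    Bf (Uf j + 3) = Wf j + 2 := by
  have hWj : (Wf j : ℝ) = (j:ℝ) + Bf j := by exact_mod_cast congrArg (Nat.cast (R := ℝ)) (W_eq j)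
  have hcond' : ((Bf j : ℝ) + 1) * phi ≤ (j:ℝ) + 1 := by
    have := B_le' (j+1)
    rw [hcond] at this
    push_cast at this
    linarith
  have h2 := lt_W' j
  have hphi1 : (0:ℝ) ≤ phi - 1 := by linarith [one_lt_phi]
  have hexp1 : ((Bf j : ℝ) + 1) * phi * (phi - 1) = (Bf j : ℝ) + 1 := by
    nlinarith [phi_sq]
  have hβub : (Bf j : ℝ) ≤ ((j:ℝ)+1) * phi - j - 2 := by
    have hint := mul_le_mul_of_nonneg_right hcond' hphi1
    rw [hexp1] at hint
    linarith
  unfold Uf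
  apply B_eq_of
  · -- (Wf j + 2) * phi ≤ Wf j + j + 3
    have hint := mul_le_mul_of_nonneg_right hβub hphi1
    have hexp2 : (((j:ℝ)+1) * phi - j - 2) * (phi - 1)
        = ((j:ℝ)+1) * (phi * phi) - ((j:ℝ)+1) * phi - ((j:ℝ)+2) * phi + (j:ℝ) + 2 := by ring
    rw [hexp2, phi_sq] at hint
    push_cast
    rw [hWj]
    nlinarith [phi_sq]
  · -- Wf j + j + 3 < (Wf j + 3) * phi
    have hexp3 : ((j:ℝ) * phi + 2) * phi = (j:ℝ) * (phi * phi) + 2 * phi := by ring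
    have hint : ((j:ℝ) * phi + 2) * phi < ((Wf j : ℝ) + 3) * phi := by
      apply mul_lt_mul_of_pos_right _ phi_pos
      linarith
    rw [hexp3, phi_sq] at hint
    push_cast
    nlinarith [phi_lb]

lemma gU2 (j : ℕ) (hj : 1 ≤ j) (hcond : Bf (j+1) = Bf j + 1) :
    g (Uf j + 2) = Wf j + 1 := by
  unfold g
  rw [show Uf j + 2 + 1 = Uf j + 3 from rfl, B_U3 j hj hcond, B_U2 j hj, if_pos rfl]
  omega

lemma gW1 (k : ℕ) (hcond : Bf (k+1) = Bf k + 1) : g (Wf k + 1) = Bf k := by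
  have h1 : Wf (k+1) = Wf k + 2 := by
    have e1 := W_eq (k+1)
    have e2 := W_eq k
    omega
  have h2 : Bf (Wf k + 2) = k := by
    rw [← h1]; exact B_W k
  unfold g
  rw [show Wf k + 1 + 1 = Wf k + 2 from rfl, h2, B_W1 k, if_neg (by omega)]
  have := W_eq k
  omega

theorem A_eq : ∀ n : ℕ, 1 ≤ n → ∀ i : ℕ,
    A n i = if i < Bf (n+2) then i else if Wf (n+1) ≤ i then i else g (i + n + 2) := by
  intro n
  induction n with
  | zero => omega
  | succ n ih =>
    intro _ i
    rcases Nat.eq_zero_or_pos n with rfl | hn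
    · -- row 1
      have hset : {i | A 0 i = 0 + 1} = {1} := by
        ext k; simp [A_zero]
      have hp : sInf {i | A 0 i = 0 + 1} = 1 := by rw [hset, csInf_singleton]
      rw [A_succ, hp]
      rcases i with _ | _ | _ | i
      · simp [A_zero, Bf3]
      · rw [if_neg (by omega), if_pos (by omega), A_zero]
        rw [if_neg (by rw [Bf3]; omega), if_neg (by rw [Wf2]; omega)]
        rw [show 1 + 0 + 1 + 2 = 4 from rfl, g4]
      · rw [if_neg (by omega), if_neg (by omega), if_pos (by omega)]
        rw [if_neg (by rw [Bf3]; omega), if_neg (by rw [Wf2]; omega)]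
        rw [show 2 + 0 + 1 + 2 = 5 from rfl, g5]
      · rw [if_neg (by omega), if_neg (by omega), if_neg (by omega), A_zero]
        rw [if_neg (by rw [Bf3]; omega), if_pos (by rw [Wf2]; omega)]
    · -- inductive step, n ≥ 1
      show A (n+1) i = if i < Bf (n+3) then i else if Wf (n+2) ≤ i then i else g (i + (n+1) + 2)
      have hb1 : 1 ≤ Bf (n+1) := by
        have := B_mono (show 2 ≤ n+1 by omega); rw [Bf2] at this; omega
      have hWn1 : Wf (n+1) = n+1+Bf (n+1) := by have := W_eq (n+1); omega
      have hWn2 : Wf (n+2) = n+2+Bf (n+2) := by have := W_eq (n+2); omega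
      have hbs : Bf (n+2) ≤ Bf (n+1) + 1 := B_succ_le (n+1)
      have hbs2 : Bf (n+1) ≤ Bf (n+2) := B_mono (by omega)
      have hbs3 : Bf (n+3) ≤ Bf (n+2) + 1 := B_succ_le (n+2)
      have hbs4 : Bf (n+2) ≤ Bf (n+3) := B_mono (by omega)
      have hbn : Bf (n+2) ≤ n + 1 := by have := B_lt_self (n+2) (by omega); omega
      have hf5 : Bf (n+3) ≤ n + Bf (n+1) := by
        rcases Nat.lt_or_ge n 2 with h | h
        · interval_cases n
          · rw [show (1:ℕ)+3 = 4 from rfl, Bf4, Bf2]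
        · omega
      -- position of n+1 in row n
      have hmem : A n (Bf (n+2)) = n + 1 := by
        rw [ih hn, if_neg (by omega), if_neg (by omega)]
        rw [show Bf (n+2) + n + 2 = Wf (n+2) by omega, g_W (n+2) (by omega)]
        omega
      have hp : sInf {i | A n i = n + 1} = Bf (n+2) := by
        have hne : (Bf (n+2)) ∈ {i | A n i = n + 1} := hmem
        apply le_antisymm (Nat.sInf_le hne)
        have hmin := Nat.sInf_mem (⟨_, hne⟩ : {i | A n i = n + 1}.Nonempty)
        by_contra hcon
        push_neg at hcon
        have : A n (sInf {i | A n i = n + 1}) = sInf {i | A n i = n + 1} := by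
          rw [ih hn, if_pos hcon]
        have h2 : sInf {i | A n i = n + 1} = n + 1 := by
          have := Set.mem_setOf_eq ▸ hmin
          omega
        omega
      rw [A_succ, hp]
      by_cases h1 : i < Bf (n+2)
      · rw [if_pos h1, ih hn i, if_pos h1, if_pos (by omega)]
      · push_neg at h1
        by_cases h2 : i < Bf (n+2) + (n+1)
        · rw [if_neg (by omega), if_pos h2, ih hn (i+1), if_neg (by omega)]
          by_cases h3 : Wf (n+1) ≤ i + 1
          · rw [if_pos h3]
            have hub : i + 1 ≤ Wf (n+1) + 1 := by omega
            rw [if_neg (show ¬ i < Bf (n+3) by omega),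
                if_neg (show ¬ Wf (n+2) ≤ i by omega)]
            rcases (show i + 1 = Wf (n+1) ∨ i + 1 = Wf (n+1) + 1 by omega) with he | he
            · rw [show i + (n+1) + 2 = Uf (n+1) + 1 by unfold Uf; omega,
                gU1 (n+1) (by omega)]
              omega
            · have hforced : Bf (n+2) = Bf (n+1) + 1 := by omega
              rw [show i + (n+1) + 2 = Uf (n+1) + 2 by unfold Uf; omega,
                gU2 (n+1) (by omega) hforced]
              omega
          · push_neg at h3
            rw [if_neg (by omega)]
            by_cases h4 : i < Bf (n+3)
            · rw [if_pos h4]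
              have hi : i = Bf (n+2) := by omega
              have hinc : Bf (n+3) = Bf (n+2) + 1 := by omega
              rw [show i + 1 + n + 2 = Wf (n+2) + 1 by omega,
                gW1 (n+2) (show Bf (n+2+1) = Bf (n+2) + 1 from hinc)]
              omega
            · push_neg at h4
              rw [if_neg (by omega), if_neg (show ¬ Wf (n+2) ≤ i by omega)]
              congr 1
              omega
        · push_neg at h2
          by_cases h3 : i = Bf (n+2) + (n+1)
          · rw [if_neg (by omega), if_neg (by omega), if_pos h3]
            rw [if_neg (show ¬ i < Bf (n+3) by omega),
                if_neg (show ¬ Wf (n+2) ≤ i by omega),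
                show i + (n+1) + 2 = Uf (n+2) by unfold Uf; omega,
                g_U (n+2) (by omega)]
            omega
          · rw [if_neg (by omega), if_neg (by omega), if_neg h3, ih hn i,
                if_neg (show ¬ i < Bf (n+2) by omega),
                if_pos (show Wf (n+1) ≤ i by omega),
                if_neg (show ¬ i < Bf (n+3) by omega),
                if_pos (show Wf (n+2) ≤ i by omega)]
lemma W_mono {a b : ℕ} (h : a ≤ b) : Wf a ≤ Wf b :=
  Nat.floor_mono (mul_le_mul_of_nonneg_right (by exact_mod_cast h) phi_pos.le)

lemma U_mono {a b : ℕ} (h : a ≤ b) : Uf a ≤ Uf b := by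
  have := W_mono h; unfold Uf; omega

lemma W_W_le_U (j : ℕ) : Wf (Wf j) ≤ Uf j := by
  have h1 := W_le' (Wf j)
  have h2 := W_le' j
  have h3 := lt_W' j
  have h4 : (Wf j : ℝ) * phi ≤ ((j:ℝ) * phi) * phi := mul_le_mul_of_nonneg_right h2 phi_pos.le
  have h5 : ((j:ℝ) * phi) * phi = (j:ℝ) * (phi + 1) := by
    linear_combination (j:ℝ) * phi_sq
  have hr : (Wf (Wf j) : ℝ) < ((Uf j + 1 : ℕ) : ℝ) := by
    unfold Uf; push_cast
    nlinarith
  have : Wf (Wf j) < Uf j + 1 := by exact_mod_cast hr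
  omega

lemma U_lt_WW (j : ℕ) (hj : 1 ≤ j) : Uf j < Wf (Wf j + 1) := by
  have hge : Uf j ≤ Wf (Wf j + 1) := by
    have h2 := lt_W' j
    have h3 := lt_W' (Wf j + 1)
    have h5 : ((j:ℝ) * phi) * phi = (j:ℝ) * (phi + 1) := by
      linear_combination (j:ℝ) * phi_sq
    have h6 : ((j:ℝ) * phi) * phi ≤ ((Wf j : ℝ) + 1) * phi :=
      mul_le_mul_of_nonneg_right h2.le phi_pos.le
    have h0 := W_le' j
    have hr : ((Uf j : ℕ) : ℝ) < (Wf (Wf j + 1) : ℝ) + 1 := by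
      unfold Uf; push_cast at h3 ⊢
      nlinarith
    have : Uf j < Wf (Wf j + 1) + 1 := by exact_mod_cast hr
    omega
  rcases hge.lt_or_eq with h | h
  · exact h
  · exfalso
    have e1 : Bf (Wf (Wf j + 1) + 1) = Wf j + 1 := B_W1 (Wf j + 1)
    have e2 : Bf (Uf j + 1) = Wf j := notLW_U j hj
    rw [← h] at e1
    omega

lemma U_B_lt (n : ℕ) (hn : 1 ≤ n) : Uf (Bf (n+2)) < Wf (n+2) := by
  have h1 := B_lt' (n+2) (by omega)
  have h2 := W_le' (Bf (n+2))
  have h4 : Wf (Bf (n+2)) < n+2 := by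
    have hr : (Wf (Bf (n+2)) : ℝ) < ((n+2 : ℕ) : ℝ) := by push_cast; push_cast at h1; linarith
    exact_mod_cast hr
  have := W_eq (n+2)
  unfold Uf
  omega

lemma W_B1_ge (n : ℕ) : n + 2 ≤ Wf (Bf (n+2) + 1) := by
  have h1 := lt_B' (n+2)
  have h2 := lt_W' (Bf (n+2) + 1)
  have hr : ((n+2 : ℕ) : ℝ) < (Wf (Bf (n+2) + 1) : ℝ) + 1 := by
    push_cast at h1 h2 ⊢; linarith
  have : n+2 < Wf (Bf (n+2) + 1) + 1 := by exact_mod_cast hr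
  omega

lemma g_mem (n : ℕ) (hn : 1 ≤ n) (m : ℕ) (hm1 : Wf (n+2) ≤ m) (hm2 : m ≤ Uf (n+1)) :
    (∃ j, n+2 ≤ j ∧ j ≤ Wf (n+1) ∧ Wf j = m ∧ g m = j - 1) ∨
    (∃ j, Bf (n+2) + 1 ≤ j ∧ j ≤ n+1 ∧ Uf j = m ∧ g m = j - 1) := by
  have hm0 : 1 ≤ m := by
    have h := W_eq (n+2); omega
  by_cases hLW : Bf (m+1) = Bf m + 1
  · left
    have hrep := LW_rep m hm0 hLW
    refine ⟨Bf (m+1), ?_, ?_, hrep, ?_⟩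
    · by_contra hc
      push_neg at hc
      have : Wf (Bf (m+1)) < Wf (n+2) := W_lt_W (by omega)
      omega
    · by_contra hc
      push_neg at hc
      have h5 : Wf (Wf (n+1) + 1) ≤ Wf (Bf (m+1)) := W_mono (by omega)
      have h6 := U_lt_WW (n+1) (by omega)
      omega
    · unfold g; rw [if_pos hLW]
  · right
    have hBm : Bf (m+1) = Bf m := by
      have h1 := B_succ_le m
      have h2 := B_mono (show m ≤ m+1 by omega)
      omega
    obtain ⟨hrep, hj1⟩ := UW_rep m hm0 hBm
    refine ⟨m - Bf m, ?_, ?_, hrep, ?_⟩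
    · by_contra hc
      push_neg at hc
      have h5 : Uf (m - Bf m) ≤ Uf (Bf (n+2)) := U_mono (by omega)
      have h6 := U_B_lt n hn
      omega
    · by_contra hc
      push_neg at hc
      have h5 : Uf (n+1) < Uf (m - Bf m) := U_lt_U (by omega)
      omega
    · unfold g; rw [if_neg hLW]

theorem middle_segment_permutation (n : ℕ) (hn : 1 ≤ n) :
    Set.BijOn (A n) (Set.Ioo (⌊((n : ℝ) + 2) / phi⌋₊ - 1) ⌊((n : ℝ) + 1) * phi⌋₊)
        (Set.Ioo (⌊((n : ℝ) + 2) / phi⌋₊ - 1) ⌊((n : ℝ) + 1) * phi⌋₊) ∧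
      ∀ i ∈ Set.Ioo (⌊((n : ℝ) + 2) / phi⌋₊ - 1) ⌊((n : ℝ) + 1) * phi⌋₊, A n i ≠ i := by
  have e1 : ⌊((n : ℝ) + 2) / phi⌋₊ = Bf (n+2) := by
    unfold Bf; congr 1; push_cast; ring
  have e2 : ⌊((n : ℝ) + 1) * phi⌋₊ = Wf (n+1) := by
    unfold Wf; congr 1; push_cast; ring
  rw [e1, e2]
  have hb1 : 1 ≤ Bf (n+2) := by
    have h := B_mono (show 3 ≤ n+2 by omega); rw [Bf3] at h; omega
  have hbn : Bf (n+2) ≤ n+1 := by have := B_lt_self (n+2) (by omega); omega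
  have hb0 : 1 ≤ Bf (n+1) := by
    have h := B_mono (show 2 ≤ n+1 by omega); rw [Bf2] at h; omega
  have hW1 : Wf (n+1) = n+1+Bf (n+1) := by have := W_eq (n+1); omega
  have hW2 : Wf (n+2) = n+2+Bf (n+2) := by have := W_eq (n+2); omega
  have hmem : ∀ i : ℕ, i ∈ Set.Ioo (Bf (n+2) - 1) (Wf (n+1)) ↔ Bf (n+2) ≤ i ∧ i < Wf (n+1) := by
    intro i; simp only [Set.mem_Ioo]; omega
  have hval : ∀ i, Bf (n+2) ≤ i → i < Wf (n+1) →
      A n i = g (i+n+2) ∧ Wf (n+2) ≤ i+n+2 ∧ i+n+2 ≤ Uf (n+1) := by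
    intro i h1 h2
    refine ⟨?_, by omega, by unfold Uf; omega⟩
    rw [A_eq n hn i, if_neg (by omega), if_neg (by omega)]
  constructor
  · refine ⟨?_, ?_, ?_⟩
    · -- MapsTo
      intro i hi
      rw [hmem] at hi
      rw [hmem]
      obtain ⟨hA, hm1, hm2⟩ := hval i hi.1 hi.2
      rw [hA]
      rcases g_mem n hn _ hm1 hm2 with ⟨j, hj1, hj2, _, hg⟩ | ⟨j, hj1, hj2, _, hg⟩ <;>
        rw [hg] <;> omega
    · -- InjOn
      intro x hx y hy hxy
      rw [hmem] at hx hy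
      obtain ⟨hAx, hx1, hx2⟩ := hval x hx.1 hx.2
      obtain ⟨hAy, hy1, hy2⟩ := hval y hy.1 hy.2
      rw [hAx, hAy] at hxy
      rcases g_mem n hn _ hx1 hx2 with ⟨j, hj1, hj2, hjm, hg⟩ | ⟨j, hj1, hj2, hjm, hg⟩ <;>
        rcases g_mem n hn _ hy1 hy2 with ⟨k, hk1, hk2, hkm, hgk⟩ | ⟨k, hk1, hk2, hkm, hgk⟩
      · have hjk : j = k := by omega
        subst hjk; omega
      · omega
      · omega
      · have hjk : j = k := by omega
        subst hjk; omega
    · -- SurjOn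
      intro v hv
      rw [hmem] at hv
      rcases Nat.lt_or_ge v (n+1) with hsmall | hbig
      · -- small values: preimage via Uf
        have h1 : Wf (n+2) < Uf (Bf (n+2) + 1) := by
          have h2 := W_B1_ge n
          unfold Uf at *
          omega
        have h3 : Uf (Bf (n+2) + 1) ≤ Uf (v+1) := U_mono (by omega)
        have h4 : Uf (v+1) ≤ Uf (n+1) := U_mono (by omega)
        have hUv : Uf (v+1) = Wf (v+1) + (v+1) := rfl
        have hUn : Uf (n+1) = Wf (n+1) + (n+1) := rfl
        have hi1 : Bf (n+2) ≤ Uf (v+1) - (n+2) := by omega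
        have hi2 : Uf (v+1) - (n+2) < Wf (n+1) := by omega
        obtain ⟨hA, _, _⟩ := hval _ hi1 hi2
        refine ⟨Uf (v+1) - (n+2), (hmem _).2 ⟨hi1, hi2⟩, ?_⟩
        rw [hA, show Uf (v+1) - (n+2) + n + 2 = Uf (v+1) by omega, g_U (v+1) (by omega)]
        omega
      · -- big values: preimage via Wf
        have h1 : Wf (n+2) ≤ Wf (v+1) := W_mono (by omega)
        have h2 : Wf (v+1) ≤ Uf (n+1) :=
          le_trans (W_mono (show v+1 ≤ Wf (n+1) by omega)) (W_W_le_U (n+1))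
        have hUn : Uf (n+1) = Wf (n+1) + (n+1) := rfl
        have hi1 : Bf (n+2) ≤ Wf (v+1) - (n+2) := by omega
        have hi2 : Wf (v+1) - (n+2) < Wf (n+1) := by omega
        obtain ⟨hA, _, _⟩ := hval _ hi1 hi2
        refine ⟨Wf (v+1) - (n+2), (hmem _).2 ⟨hi1, hi2⟩, ?_⟩
        rw [hA, show Wf (v+1) - (n+2) + n + 2 = Wf (v+1) by omega, g_W (v+1) (by omega)]
        omega
  · -- derangement
    intro i hi
    rw [hmem] at hi
    obtain ⟨hA, hm1, hm2⟩ := hval i hi.1 hi.2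
    rw [hA]
    rcases g_mem n hn _ hm1 hm2 with ⟨j, hj1, hj2, hjm, hg⟩ | ⟨j, hj1, hj2, hjm, hg⟩
    · intro hcon
      have hji : j = i + 1 := by omega
      subst hji
      have hBi : Bf (i+1) = n+1 := by have := W_eq (i+1); omega
      have h4 : Bf (i+1) ≤ Bf (Wf (n+1)) := B_mono (by omega)
      have h5 : Bf (Wf (n+1)) = n := B_W n
      omega
    · intro hcon
      have hji : j = i + 1 := by omega
      subst hji
      have hWi : Wf (i+1) = n+1 := by unfold Uf at hjm; omega
      have h4 : n+2 ≤ Wf (Bf (n+2)+1) := W_B1_ge n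
      have h5 : Wf (Bf (n+2)+1) ≤ Wf (i+1) := W_mono (by omega)
      omega
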